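/- arXiv:2503.21399 — 4 statements merged into one kernel-verified Lean document; each statement's English description precedes it below -/
import Mathlib

section
/- Let Σ be a positive definite real n×n matrix and let H be a real m×n matrix of rank m (i.e., H is surjective as a linear map ℝⁿ → ℝᵐ), with m ≤ n. Then lim_{δ→0⁺} δ^{2m} · det(Iₙ + δ⁻² Σ^{1/2} HᵀH Σ^{1/2}) = det(H Σ Hᵀ), where Σ^{1/2} denotes the positive semidefinite square root of Σ and the limit is over δ tending to 0 from the right. -/
open Filter

open scoped ComplexOrder in
/-- The positive semidefinite square root, as `Matrix.PosSemidef.sqrt` was defined in Mathlib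
(December 2024); it has since been removed from Mathlib in favour of `CFC.sqrt`. -/
noncomputable def Matrix.PosSemidef.sqrt {n 𝕜 : Type*} [Fintype n] [RCLike 𝕜] [DecidableEq n]
    {A : Matrix n n 𝕜} (hA : A.PosSemidef) : Matrix n n 𝕜 :=
  (hA.1.eigenvectorUnitary : Matrix n n 𝕜) *
    Matrix.diagonal ((RCLike.ofReal : ℝ → 𝕜) ∘ Real.sqrt ∘ hA.1.eigenvalues) *
    (star hA.1.eigenvectorUnitary : Matrix n n 𝕜)

open scoped ComplexOrder in
theorem stmt5_sqrt_mul_self {n 𝕜 : Type*} [Fintype n] [RCLike 𝕜] [DecidableEq n]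
    {A : Matrix n n 𝕜} (hA : A.PosSemidef) : hA.sqrt * hA.sqrt = A := by
  unfold Matrix.PosSemidef.sqrt
  have hU : (star hA.1.eigenvectorUnitary : Matrix n n 𝕜) * (hA.1.eigenvectorUnitary : Matrix n n 𝕜) = 1 :=
    Unitary.coe_star_mul_self _
  calc _ = (hA.1.eigenvectorUnitary : Matrix n n 𝕜) *
        (Matrix.diagonal ((RCLike.ofReal : ℝ → 𝕜) ∘ Real.sqrt ∘ hA.1.eigenvalues) *
          ((star hA.1.eigenvectorUnitary : Matrix n n 𝕜) * (hA.1.eigenvectorUnitary : Matrix n n 𝕜)) *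
          Matrix.diagonal ((RCLike.ofReal : ℝ → 𝕜) ∘ Real.sqrt ∘ hA.1.eigenvalues)) *
        (star hA.1.eigenvectorUnitary : Matrix n n 𝕜) := by simp only [Matrix.mul_assoc]
    _ = (hA.1.eigenvectorUnitary : Matrix n n 𝕜) *
        Matrix.diagonal ((RCLike.ofReal : ℝ → 𝕜) ∘ hA.1.eigenvalues) *
        (star hA.1.eigenvectorUnitary : Matrix n n 𝕜) := by
      rw [hU, Matrix.mul_one, Matrix.diagonal_mul_diagonal]
      congr 3
      funext i
      simp only [Function.comp_apply, ← RCLike.ofReal_mul,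
        Real.mul_self_sqrt (hA.eigenvalues_nonneg i)]
    _ = A := hA.1.spectral_theorem.symm

/-- For positive definite `Σ` and a surjective (rank `m`) `m×n` matrix `H`, `m ≤ n`:
`lim_{δ→0⁺} δ^{2m} det(Iₙ + δ⁻² Σ^{1/2}HᵀHΣ^{1/2}) = det(HΣHᵀ)`. -/
theorem stmt_5 {n m : ℕ} (hmn : m ≤ n) (S : Matrix (Fin n) (Fin n) ℝ) (hS : S.PosDef)
    (H : Matrix (Fin m) (Fin n) ℝ) (hrank : H.rank = m) :
    Tendsto
      (fun δ : ℝ => δ ^ (2 * m) *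
        ((1 : Matrix (Fin n) (Fin n) ℝ)
          + (δ ^ 2)⁻¹ • (hS.posSemidef.sqrt * (H.transpose * H) * hS.posSemidef.sqrt)).det)
      (nhdsWithin 0 (Set.Ioi 0))
      (nhds (H * S * H.transpose).det) := by
  set R := hS.posSemidef.sqrt with hR
  set C := H * S * H.transpose with hC
  have key : ∀ δ : ℝ, 0 < δ →
      δ ^ (2 * m) *
        ((1 : Matrix (Fin n) (Fin n) ℝ) + (δ ^ 2)⁻¹ • (R * (H.transpose * H) * R)).det
      = ((δ ^ 2) • (1 : Matrix (Fin m) (Fin m) ℝ) + C).det := by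
    intro δ hδ
    have hδ2 : (δ ^ 2) ≠ 0 := by positivity
    have h1 : R * (H.transpose * H) * R = (R * H.transpose) * (H * R) := by
      simp only [Matrix.mul_assoc]
    have h2 : (δ ^ 2)⁻¹ • ((R * H.transpose) * (H * R))
        = (R * H.transpose) * ((δ ^ 2)⁻¹ • (H * R)) := by
      rw [Matrix.mul_smul]
    have h3 : ((δ ^ 2)⁻¹ • (H * R)) * (R * H.transpose) = (δ ^ 2)⁻¹ • C := by
      rw [Matrix.smul_mul, hC]
      congr 1
      calc H * R * (R * H.transpose) = H * (R * R) * H.transpose := by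
              simp only [Matrix.mul_assoc]
        _ = H * S * H.transpose := by rw [hR, stmt5_sqrt_mul_self hS.posSemidef]
    rw [h1, h2, Matrix.det_one_add_mul_comm, h3]
    calc δ ^ (2 * m) * ((1 : Matrix (Fin m) (Fin m) ℝ) + (δ ^ 2)⁻¹ • C).det
        = ((δ ^ 2) • ((1 : Matrix (Fin m) (Fin m) ℝ) + (δ ^ 2)⁻¹ • C)).det := by
          rw [Matrix.det_smul]; simp [pow_mul]
      _ = ((δ ^ 2) • (1 : Matrix (Fin m) (Fin m) ℝ) + C).det := by
          rw [smul_add, smul_smul, mul_inv_cancel₀ hδ2, one_smul]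
  have heq : (fun δ : ℝ => ((δ ^ 2) • (1 : Matrix (Fin m) (Fin m) ℝ) + C).det)
      =ᶠ[nhdsWithin (0:ℝ) (Set.Ioi 0)]
      (fun δ : ℝ => δ ^ (2 * m) *
        ((1 : Matrix (Fin n) (Fin n) ℝ) + (δ ^ 2)⁻¹ • (R * (H.transpose * H) * R)).det) := by
    filter_upwards [self_mem_nhdsWithin] with δ hδ
    exact (key δ hδ).symm
  refine Tendsto.congr' heq ?_
  have hcont : Continuous fun δ : ℝ =>
        ((δ ^ 2) • (1 : Matrix (Fin m) (Fin m) ℝ) + C).det := by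
      apply Continuous.matrix_det
      exact (((continuous_pow 2).smul continuous_const).add continuous_const)
  have := hcont.tendsto 0
  simp only [ne_eq, OfNat.ofNat_ne_zero, not_false_eq_true, zero_pow, zero_smul,
    zero_add] at this
  exact this.mono_left nhdsWithin_le_nhds
end

section
/- Let Σ be a positive definite real n×n matrix and let H be a real m×n matrix of rank m, with m ≤ n. For δ > 0 define f̂(δ) = det(2πΣ)^{-1/2} · (2π)^{-m/2} · δ^{-m} · det(Σ⁻¹ + δ⁻² HᵀH)^{-1/2} · (2π)^{n/2}. Then lim_{δ→0⁺} f̂(δ) = det(2π H Σ Hᵀ)^{-1/2}. -/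
open Filter Real

lemma stmt_6_rpow_key (t s d D : ℝ) (ht : 0 < t) (hs : 0 < s) (hd : 0 < d) (hD : 0 < D)
    (m n : ℕ) :
    (t^n * s)^(-(1/2):ℝ) * t^(-(m:ℝ)/2) * d^(-(m:ℝ)) * (s⁻¹ * ((d^2)⁻¹)^m * D)^(-(1/2):ℝ)
      * t^((n:ℝ)/2) = t^(-(m:ℝ)/2) * D^(-(1/2):ℝ) := by
  have h1 : (0:ℝ) < t^n * s := by positivity
  have h2 : (0:ℝ) < s⁻¹ * ((d^2)⁻¹)^m * D := by positivity
  simp only [Real.rpow_def_of_pos h1, Real.rpow_def_of_pos ht, Real.rpow_def_of_pos hd,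
    Real.rpow_def_of_pos h2, Real.rpow_def_of_pos hD, ← Real.exp_add]
  rw [Real.exp_eq_exp]
  rw [Real.log_mul (by positivity) hs.ne', Real.log_mul (by positivity) hD.ne',
    Real.log_mul (by positivity) (by positivity), Real.log_pow, Real.log_pow,
    Real.log_inv, Real.log_inv, Real.log_pow]
  push_cast
  ring

lemma stmt_6_rpow_smul (t D : ℝ) (ht : 0 < t) (hD : 0 < D) (m : ℕ) :
    (t^m * D)^(-(1/2):ℝ) = t^(-(m:ℝ)/2) * D^(-(1/2):ℝ) := by
  have h1 : (0:ℝ) < t^m * D := by positivity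
  simp only [Real.rpow_def_of_pos h1, Real.rpow_def_of_pos ht, Real.rpow_def_of_pos hD,
    ← Real.exp_add]
  rw [Real.exp_eq_exp, Real.log_mul (by positivity) hD.ne', Real.log_pow]
  push_cast
  ring

lemma stmt_6_inj {n m : ℕ} (H : Matrix (Fin m) (Fin n) ℝ) (hrank : H.rank = m) :
    Function.Injective (Matrix.mulVec H.transpose) := by
  have h1 : H.transpose.rank = m := by rw [Matrix.rank_transpose, hrank]
  have h3 := LinearMap.finrank_range_add_finrank_ker (H.transpose.mulVecLin)
  rw [show Module.finrank ℝ (LinearMap.range H.transpose.mulVecLin) = m from h1] at h3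
  simp [Module.finrank_pi] at h3
  have := LinearMap.ker_eq_bot.mp h3
  intro x y hxy
  exact this (by simpa [Matrix.vecMulLinear_apply, ← Matrix.mulVec_transpose] using hxy)

lemma stmt_6_posdef {n m : ℕ} (S : Matrix (Fin n) (Fin n) ℝ) (hS : S.PosDef)
    (H : Matrix (Fin m) (Fin n) ℝ) (hrank : H.rank = m) :
    (H * S * H.transpose).PosDef := by
  have hinj := stmt_6_inj H hrank
  rw [Matrix.posDef_iff_dotProduct_mulVec]
  constructor
  · have := (hS.posSemidef.mul_mul_conjTranspose_same H).1
    simpa [Matrix.conjTranspose_eq_transpose_of_trivial] using this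
  · intro x hx
    have hy : H.transpose.mulVec x ≠ 0 := fun h => hx (hinj (by simpa using h))
    have := hS.dotProduct_mulVec_pos hy
    simpa [star_trivial, ← Matrix.mulVec_mulVec, Matrix.dotProduct_mulVec,
      ← Matrix.mulVec_transpose] using this

lemma stmt_6_det_eq {n m : ℕ} (S : Matrix (Fin n) (Fin n) ℝ) (hS : S.PosDef)
    (H : Matrix (Fin m) (Fin n) ℝ) (δ : ℝ) (hδ : δ ≠ 0) :
    (S⁻¹ + (δ^2)⁻¹ • (H.transpose * H)).det
      = S.det⁻¹ * ((δ^2)⁻¹)^m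
          * ((δ^2) • (1:Matrix (Fin m) (Fin m) ℝ) + H * S * H.transpose).det := by
  have hd2 : (δ^2) ≠ 0 := pow_ne_zero _ hδ
  have hSu : IsUnit S.det := hS.det_pos.ne'.isUnit
  have h1 : S⁻¹ + (δ^2)⁻¹ • (H.transpose * H)
      = S⁻¹ * (1 + ((δ^2)⁻¹ • (S * H.transpose)) * H) := by
    rw [Matrix.mul_add, Matrix.mul_one, Matrix.smul_mul, Matrix.mul_smul, ← Matrix.mul_assoc,
      ← Matrix.mul_assoc, Matrix.nonsing_inv_mul _ hSu, Matrix.one_mul]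
  rw [h1, Matrix.det_mul, Matrix.det_nonsing_inv, Ring.inverse_eq_inv',
    Matrix.det_one_add_mul_comm]
  have h2 : 1 + H * ((δ^2)⁻¹ • (S * H.transpose))
      = (δ^2)⁻¹ • ((δ^2) • 1 + H * S * H.transpose) := by
    rw [smul_add, smul_smul, inv_mul_cancel₀ hd2, one_smul, Matrix.mul_smul, Matrix.mul_assoc]
  rw [h2, Matrix.det_smul]
  simp [mul_assoc]

/-- The Laplace approximation
`f̂(δ) = det(2πΣ)^{-1/2} (2π)^{-m/2} δ^{-m} det(Σ⁻¹ + δ⁻²HᵀH)^{-1/2} (2π)^{n/2}`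
converges, as `δ → 0⁺`, to the weak-noise density `det(2πHΣHᵀ)^{-1/2}`. -/
theorem stmt_6 {n m : ℕ} (hmn : m ≤ n) (S : Matrix (Fin n) (Fin n) ℝ) (hS : S.PosDef)
    (H : Matrix (Fin m) (Fin n) ℝ) (hrank : H.rank = m) :
    Tendsto
      (fun δ : ℝ =>
        (((2 * π) • S).det) ^ (-(1 / 2 : ℝ)) * (2 * π) ^ (-(m : ℝ) / 2) * δ ^ (-(m : ℝ))
          * ((S⁻¹ + (δ ^ 2)⁻¹ • (H.transpose * H)).det) ^ (-(1 / 2 : ℝ))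
          * (2 * π) ^ ((n : ℝ) / 2))
      (nhdsWithin 0 (Set.Ioi 0))
      (nhds ((((2 * π) • (H * S * H.transpose)).det) ^ (-(1 / 2 : ℝ)))) := by
  have htp : (0:ℝ) < 2 * π := by positivity
  set M := H * S * H.transpose with hM
  have hMpd : M.PosDef := stmt_6_posdef S hS H hrank
  -- determinant of the shifted matrix is positive
  have hDpos : ∀ δ : ℝ, 0 < ((δ^2) • (1:Matrix (Fin m) (Fin m) ℝ) + M).det := by
    intro δ
    have h1 : ((δ^2) • (1:Matrix (Fin m) (Fin m) ℝ)).PosSemidef := by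
      rw [Matrix.smul_one_eq_diagonal]
      exact Matrix.posSemidef_diagonal_iff.mpr (fun i => by positivity)
    exact (Matrix.PosDef.posSemidef_add h1 hMpd).det_pos
  -- the limit function
  have hcont : Tendsto (fun δ : ℝ => ((δ^2) • (1:Matrix (Fin m) (Fin m) ℝ) + M).det)
      (nhdsWithin 0 (Set.Ioi 0)) (nhds M.det) := by
    have hc : Continuous fun δ : ℝ => ((δ^2) • (1:Matrix (Fin m) (Fin m) ℝ) + M).det :=
      (((continuous_pow 2).smul continuous_const).add continuous_const).matrix_det
    have := hc.continuousAt (x := (0:ℝ))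
    have h0 : ((0:ℝ)^2) • (1:Matrix (Fin m) (Fin m) ℝ) + M = M := by simp
    rw [ContinuousAt, h0] at this
    exact this.mono_left nhdsWithin_le_nhds
  have hlim : Tendsto
      (fun δ : ℝ => (2*π)^(-(m:ℝ)/2)
        * (((δ^2) • (1:Matrix (Fin m) (Fin m) ℝ) + M).det) ^ (-(1/2):ℝ))
      (nhdsWithin 0 (Set.Ioi 0))
      (nhds ((2*π)^(-(m:ℝ)/2) * (M.det) ^ (-(1/2):ℝ))) :=
    (hcont.rpow_const (Or.inl hMpd.det_pos.ne')).const_mul _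
  -- rewrite the limit value
  have hval : (((2 * π) • M).det) ^ (-(1 / 2 : ℝ))
      = (2*π)^(-(m:ℝ)/2) * (M.det) ^ (-(1/2):ℝ) := by
    rw [Matrix.det_smul, Fintype.card_fin, stmt_6_rpow_smul _ _ htp hMpd.det_pos]
  rw [hval]
  refine hlim.congr' ?_
  filter_upwards [self_mem_nhdsWithin] with δ (hδ : 0 < δ)
  rw [stmt_6_det_eq S hS H δ hδ.ne', Matrix.det_smul, Fintype.card_fin]
  exact (stmt_6_rpow_key (2*π) S.det δ _ htp hS.det_pos hδ (hDpos δ) m n).symm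
end

section
/- Let T > 0, x₀ > 0, x_T > 0, r ∈ ℝ and σ ≠ 0. Set a = log(x_T/x₀)/T, and define X̄(t) = x₀·e^{a t} and Λ̄(t) = σ⁻²(r − a)·x₀⁻¹·e^{−a t} for t ∈ [0,T]. Then X̄(0) = x₀, X̄(T) = x_T, and the pair (X̄, Λ̄) satisfies the canonical equations X̄′(t) = r·X̄(t) − σ²·Λ̄(t)·X̄(t)² and Λ̄′(t) = −r·Λ̄(t) + σ²·Λ̄(t)²·X̄(t) for all t ∈ [0,T]. -/
open Set

/-- The most probable path `X̄(t) = x₀e^{at}` (geometric interpolation of the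
endpoints, `a = log(x_T/x₀)/T`) together with its co-state
`Λ̄(t) = σ⁻²(r−a)x₀⁻¹e^{−at}` satisfies the endpoint conditions and Pontryagin's
canonical equations `X̄′ = rX̄ − σ²Λ̄X̄²`, `Λ̄′ = −rΛ̄ + σ²Λ̄²X̄` on `[0,T]`. -/
theorem stmt_11 (T x₀ xT r σ a : ℝ) (hT : 0 < T) (hx₀ : 0 < x₀) (hxT : 0 < xT)
    (hσ : σ ≠ 0) (ha : a = Real.log (xT / x₀) / T)
    (X L : ℝ → ℝ)
    (hX : X = fun t => x₀ * Real.exp (a * t))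
    (hL : L = fun t => (σ ^ 2)⁻¹ * (r - a) * x₀⁻¹ * Real.exp (-(a * t))) :
    X 0 = x₀ ∧ X T = xT ∧
    (∀ t ∈ Icc (0:ℝ) T,
      HasDerivAt X (r * X t - σ ^ 2 * L t * (X t) ^ 2) t) ∧
    (∀ t ∈ Icc (0:ℝ) T,
      HasDerivAt L (-(r * L t) + σ ^ 2 * (L t) ^ 2 * X t) t) := by
  have hσ2 : (σ ^ 2) ≠ 0 := pow_ne_zero _ hσ
  have hx₀' : x₀ ≠ 0 := ne_of_gt hx₀
  refine ⟨by simp [hX], ?_, ?_, ?_⟩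
  · have : a * T = Real.log (xT / x₀) := by
      rw [ha]; field_simp
    rw [hX]
    simp only [this, Real.exp_log (div_pos hxT hx₀)]
    field_simp
  · intro t _
    have h1 : HasDerivAt (fun t => a * t) a t := by
      simpa using (hasDerivAt_id t).const_mul a
    have h2 := (h1.exp).const_mul x₀
    have key : x₀ * (Real.exp (a * t) * a) =
        r * X t - σ ^ 2 * L t * (X t) ^ 2 := by
      rw [hX, hL]
      simp only [Real.exp_neg]
      have he : Real.exp (a * t) ≠ 0 := Real.exp_ne_zero _
      field_simp
      ring
    rw [hX]
    simpa [key, hX] using h2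
  · intro t _
    have h1 : HasDerivAt (fun t => -(a * t)) (-a) t := by
      simpa using (hasDerivAt_id t).const_mul (-a)
    have h2 := (h1.exp).const_mul ((σ ^ 2)⁻¹ * (r - a) * x₀⁻¹)
    have key : (σ ^ 2)⁻¹ * (r - a) * x₀⁻¹ * (Real.exp (-(a * t)) * (-a)) =
        -(r * L t) + σ ^ 2 * (L t) ^ 2 * X t := by
      rw [hX, hL]
      simp only [Real.exp_neg]
      have he : Real.exp (a * t) ≠ 0 := Real.exp_ne_zero _
      field_simp
      ring
    rw [hL]
    refine h2.congr_deriv ?_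
    simp only [hL] at key ⊢
    linarith [key]
end

section
/- Let T > 0, x₀ > 0, x_T > 0, r ∈ ℝ and σ ≠ 0. Set a = log(x_T/x₀)/T, γ = (r − a)/σ², X̄(t) = x₀·e^{a t}, Λ̄(t) = γ/X̄(t), and Q(t) = −γ/X̄(t)². Then Q satisfies the Riccati equation Q′(t) − σ²·Λ̄(t)² + 2·(r − 2σ²·Λ̄(t)·X̄(t))·Q(t) − σ²·X̄(t)²·Q(t)² = 0 for all t ∈ [0,T]. -/
open Set

/-- For geometric Brownian motion, the Hessian `Q(t) = −γ/X̄(t)²` of the value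
function along the most probable path `X̄(t) = x₀e^{at}` (with
`a = log(x_T/x₀)/T`, `γ = (r−a)/σ²`, co-state `Λ̄ = γ/X̄`) satisfies the Riccati
equation `Q′ − σ²Λ̄² + 2(r − 2σ²Λ̄X̄)Q − σ²X̄²Q² = 0` on `[0,T]`. -/
theorem stmt_13 (T x₀ xT r σ a γ : ℝ) (hT : 0 < T) (hx₀ : 0 < x₀) (hxT : 0 < xT)
    (hσ : σ ≠ 0) (ha : a = Real.log (xT / x₀) / T) (hγ : γ = (r - a) / σ ^ 2)
    (X L Q : ℝ → ℝ)
    (hX : X = fun t => x₀ * Real.exp (a * t))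
    (hL : L = fun t => γ / X t)
    (hQ : Q = fun t => -γ / (X t) ^ 2) :
    ∀ t ∈ Icc (0:ℝ) T,
      deriv Q t - σ ^ 2 * (L t) ^ 2 + 2 * (r - 2 * σ ^ 2 * L t * X t) * Q t
        - σ ^ 2 * (X t) ^ 2 * (Q t) ^ 2 = 0 := by
  intro t _
  have hx₀' : x₀ ≠ 0 := ne_of_gt hx₀
  have hQ' : Q = fun t => (-γ / x₀ ^ 2) * Real.exp ((-(2 * a)) * t) := by
    funext s
    rw [hQ, hX]
    have h1 : Real.exp (a * s) ≠ 0 := Real.exp_ne_zero _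
    have h2 : Real.exp ((-(2 * a)) * s) * Real.exp (a * s) ^ 2 = 1 := by
      rw [← Real.exp_nat_mul, ← Real.exp_add]
      norm_num
      ring
    rw [eq_inv_of_mul_eq_one_left h2]
    field_simp
  have hderiv : deriv Q t = (-γ / x₀ ^ 2) * ((-(2 * a)) * Real.exp ((-(2 * a)) * t)) := by
    have h0 : HasDerivAt (fun s : ℝ => (-(2 * a)) * s) (-(2 * a)) t := by
      simpa using (hasDerivAt_id t).const_mul (-(2 * a))
    have h1 := (h0.exp.const_mul (-γ / x₀ ^ 2)).deriv
    rw [hQ', h1]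
    ring
  have hγσ : σ ^ 2 * γ = r - a := by
    rw [hγ]
    field_simp
  have he : Real.exp (a * t) ≠ 0 := Real.exp_ne_zero _
  have h2 : Real.exp ((-(2 * a)) * t) * Real.exp (a * t) ^ 2 = 1 := by
    rw [← Real.exp_nat_mul, ← Real.exp_add]
    norm_num
    ring
  have hE : Real.exp ((-(2 * a)) * t) = (Real.exp (a * t) ^ 2)⁻¹ :=
    eq_inv_of_mul_eq_one_left h2
  have hr : r = σ ^ 2 * γ + a := by linarith
  rw [hderiv, hQ, hL, hX]
  simp only
  rw [hE, hr]
  field_simp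
  ring
end
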